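/- Let A be a unital C*-algebra and u, v ∈ A isometries with u·v = λ·v·u, |λ| = 1. With ū := u(1 − vv*) + (1 − uu*)v* and p̄ := v(1 − uu*)v*, the identity p̄·ū·p̄·ū* = v·v*·(1 − u·u*) holds. Consequently, the commutator [p̄, ū·p̄·ū*] equals the commutator [u·u*, v·v*] up to sign, and in particular [p̄, ū p̄ ū*] = 0 if and only if [uu*, vv*] = 0. -/

import Mathlib

/-- For isometries `u, v` with `uv = λ•vu`, with `ū := u(1-vv*) + (1-uu*)v*` and
`p̄ := v(1-uu*)v*`, one has `p̄ ū p̄ ū* = vv*(1-uu*)`; consequently the commutator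
`[p̄, ū p̄ ū*]` equals `[uu*, vv*]` up to sign, and in particular `[p̄, ū p̄ ū*] = 0` iff
`[uu*, vv*] = 0`. -/
theorem stmt_10 {A : Type*} [NormedRing A] [StarRing A] [CStarRing A]
    [NormedAlgebra ℂ A] [StarModule ℂ A] [CompleteSpace A]
    (u v : A) (hu : star u * u = 1) (hv : star v * v = 1)
    (l : ℂ) (hl : ‖l‖ = 1) (huv : u * v = l • (v * u))
    (ub pb : A)
    (hub : ub = u * (1 - v * star v) + (1 - u * star u) * star v)
    (hpb : pb = v * (1 - u * star u) * star v) :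
    pb * ub * pb * star ub = v * star v * (1 - u * star u) ∧
    (pb * (ub * pb * star ub) - (ub * pb * star ub) * pb
        = (u * star u) * (v * star v) - (v * star v) * (u * star u) ∨
      pb * (ub * pb * star ub) - (ub * pb * star ub) * pb
        = (v * star v) * (u * star u) - (u * star u) * (v * star v)) ∧
    (pb * (ub * pb * star ub) = (ub * pb * star ub) * pb ↔
      (u * star u) * (v * star v) = (v * star v) * (u * star u)) := by
  have hu' : ∀ x : A, star u * (u * x) = x := fun x => by rw [← mul_assoc, hu, one_mul]
  have hv' : ∀ x : A, star v * (v * x) = x := fun x => by rw [← mul_assoc, hv, one_mul]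
  have hcl : (starRingEnd ℂ) l * l = 1 := by
    rw [mul_comm, Complex.mul_conj]
    norm_cast
    simp [Complex.normSq_eq_norm_sq, hl]
  have hvu : v * u = (starRingEnd ℂ) l • (u * v) := by
    rw [huv, smul_smul, hcl, one_smul]
  have hsuv : star u * star v = l • (star v * star u) := by
    have h := congrArg star hvu
    simp only [star_mul, star_smul, RCLike.star_def, Complex.conj_conj] at h
    exact h
  have key : v * (u * star u) * star v = u * (v * star v) * star u := by
    calc v * (u * star u) * star v = (v * u) * (star u * star v) := by
            simp [mul_assoc]
      _ = ((starRingEnd ℂ) l • (u * v)) * (l • (star v * star u)) := by rw [hvu, hsuv]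
      _ = ((starRingEnd ℂ) l * l) • ((u * v) * (star v * star u)) := by
            rw [smul_mul_assoc, mul_smul_comm, smul_smul]
      _ = (u * v) * (star v * star u) := by rw [hcl, one_smul]
      _ = u * (v * star v) * star u := by simp [mul_assoc]
  have hpb' : pb = v * star v - u * (v * star v) * star u := by
    rw [hpb, mul_sub, mul_one, sub_mul, key]
  have hY : (u * (v * star v) * star u) * (u * star u) = u * (v * star v) * star u := by
    simp only [mul_assoc, hu']
  have hZ : (u * star u) * (u * (v * star v) * star u) = u * (v * star v) * star u := by
    simp only [mul_assoc, hu']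
  have he : (u * star u) * (u * star u) = u * star u := by
    simp only [mul_assoc, hu']
  have hq : (1 - u * star u) * (1 - u * star u) = 1 - u * star u := by
    rw [sub_mul, one_mul, mul_sub, mul_one, he]; abel
  have h0 : (1 - u * star u) * (u * star u) = 0 := by
    rw [sub_mul, one_mul, he, sub_self]
  have h3 : pb * (1 - u * star u) = v * star v * (1 - u * star u) := by
    have hY0 : u * (v * star v) * star u * (1 - u * star u) = 0 := by
      rw [mul_sub, mul_one, hY, sub_self]
    rw [hpb', sub_mul, hY0, sub_zero]
  have h4 : (1 - u * star u) * pb = (1 - u * star u) * (v * star v) := by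
    have hZ0 : (1 - u * star u) * (u * (v * star v) * star u) = 0 := by
      rw [sub_mul, one_mul, hZ, sub_self]
    rw [hpb', mul_sub, hZ0, sub_zero]
  have hsub : star ub = (1 - v * star v) * star u + v * (1 - u * star u) := by
    rw [hub]; simp [star_sub, star_mul, mul_assoc]
  have hrv : (1 - v * star v) * v = 0 := by
    rw [sub_mul, one_mul, mul_assoc, hv, mul_one, sub_self]
  have hsvr : star v * (1 - v * star v) = 0 := by
    rw [mul_sub, mul_one, ← mul_assoc, hv, one_mul, sub_self]
  have h1 : ub * pb = (1 - u * star u) * star v := by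
    rw [hub, hpb, add_mul]
    have e1 : u * (1 - v * star v) * (v * (1 - u * star u) * star v) = 0 := by
      rw [mul_assoc u, mul_assoc v, ← mul_assoc (1 - v * star v), hrv, zero_mul, mul_zero]
    have e2 : (1 - u * star u) * star v * (v * (1 - u * star u) * star v)
        = (1 - u * star u) * star v := by
      rw [mul_assoc v (1 - u * star u) (star v), mul_assoc (1 - u * star u), hv',
        ← mul_assoc, hq]
    rw [e1, e2, zero_add]
  have h2 : ub * pb * star ub = 1 - u * star u := by
    rw [h1, hsub, mul_add]
    have e1 : (1 - u * star u) * star v * ((1 - v * star v) * star u) = 0 := by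
      rw [mul_assoc (1 - u * star u), ← mul_assoc (star v), hsvr, zero_mul, mul_zero]
    have e2 : (1 - u * star u) * star v * (v * (1 - u * star u)) = 1 - u * star u := by
      rw [mul_assoc (1 - u * star u), hv', hq]
    rw [e1, e2, zero_add]
  have hmain : pb * ub * pb * star ub = v * star v * (1 - u * star u) := by
    calc pb * ub * pb * star ub = pb * (ub * pb * star ub) := by simp [mul_assoc]
      _ = pb * (1 - u * star u) := by rw [h2]
      _ = v * star v * (1 - u * star u) := h3
  have hcomm : pb * (ub * pb * star ub) - (ub * pb * star ub) * pb
      = (u * star u) * (v * star v) - (v * star v) * (u * star u) := by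
    rw [h2, h3, h4]; noncomm_ring
  refine ⟨hmain, Or.inl hcomm, ?_⟩
  rw [← sub_eq_zero, hcomm, sub_eq_zero]
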